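/- For 1 < p < ∞, the integral π_p := 2∫₀¹ (1 - t^p)^{-1/p} dt equals 2π/(p sin(π/p)). -/
import Mathlib

open Real MeasureTheory

theorem pi_p_eq (p : ℝ) (hp : 1 < p) :
    2 * ∫ t in (0:ℝ)..1, (1 - t ^ p) ^ (-(1/p)) = 2 * π / (p * Real.sin (π / p)) := by
  have hp0 : 0 < p := lt_trans one_pos hp
  have hip : 0 < 1/p := by positivity
  have hip1 : 1/p < 1 := by rw [div_lt_one hp0]; exact hp
  have hsin : 0 < Real.sin (π / p) := by
    apply Real.sin_pos_of_pos_of_lt_pi (by positivity)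
    rw [div_lt_iff₀ hp0]
    nlinarith [Real.pi_pos]
  -- change of variables t = x^(1/p)
  have himg : (fun x : ℝ => x ^ (1/p)) '' Set.Ioo 0 1 = Set.Ioo 0 1 := by
    ext y
    constructor
    · rintro ⟨x, ⟨hx0, hx1⟩, rfl⟩
      exact ⟨Real.rpow_pos_of_pos hx0 _, Real.rpow_lt_one hx0.le hx1 hip⟩
    · rintro ⟨hy0, hy1⟩
      refine ⟨y ^ p, ⟨Real.rpow_pos_of_pos hy0 _, Real.rpow_lt_one hy0.le hy1 hp0⟩, ?_⟩
      show (y ^ p) ^ (1/p) = y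
      rw [← Real.rpow_mul hy0.le, mul_one_div, div_self hp0.ne', Real.rpow_one]
  have hderiv : ∀ x ∈ Set.Ioo (0:ℝ) 1, HasDerivWithinAt (fun x : ℝ => x ^ (1/p))
      (1/p * x ^ (1/p - 1)) (Set.Ioo 0 1) x := fun x hx =>
    (Real.hasDerivAt_rpow_const (Or.inl hx.1.ne')).hasDerivWithinAt
  have hinj : Set.InjOn (fun x : ℝ => x ^ (1/p)) (Set.Ioo 0 1) := by
    intro a ha b hb h
    rcases lt_trichotomy a b with hab | hab | hab
    · exact absurd h (ne_of_lt (Real.rpow_lt_rpow ha.1.le hab hip))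
    · exact hab
    · exact absurd h.symm (ne_of_lt (Real.rpow_lt_rpow hb.1.le hab hip))
  have key := MeasureTheory.integral_image_eq_integral_abs_deriv_smul measurableSet_Ioo
      hderiv hinj (fun t => (1 - t ^ p) ^ (-(1/p)))
  rw [himg] at key
  -- simplify the substituted integrand
  have key2 : ∫ t in Set.Ioo (0:ℝ) 1, (1 - t ^ p) ^ (-(1/p))
      = (1/p) * ∫ x in Set.Ioo (0:ℝ) 1, x ^ (1/p - 1) * (1 - x) ^ (-(1/p)) := by
    rw [key, ← MeasureTheory.integral_const_mul]
    apply MeasureTheory.setIntegral_congr_fun measurableSet_Ioo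
    intro x hx
    have hx0 := hx.1
    have h1 : (x ^ (1/p)) ^ p = x := by
      rw [← Real.rpow_mul hx0.le, one_div_mul_cancel hp0.ne', Real.rpow_one]
    have h2 : |1/p * x ^ (1/p - 1)| = 1/p * x ^ (1/p - 1) := by
      apply abs_of_pos
      positivity
    simp only [smul_eq_mul, h1, h2]
    ring
  -- the Beta integral
  have hJ : (∫ x in Set.Ioo (0:ℝ) 1, x ^ (1/p - 1) * (1 - x) ^ (-(1/p)))
      = π / Real.sin (π / p) := by
    have hB : Complex.betaIntegral ((1/p : ℝ) : ℂ) (1 - ((1/p : ℝ) : ℂ))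
        = ((π / Real.sin (π / p) : ℝ) : ℂ) := by
      have h1 := Complex.Gamma_mul_Gamma_eq_betaIntegral
        (s := ((1/p : ℝ) : ℂ)) (t := 1 - ((1/p : ℝ) : ℂ)) (by simpa using hip)
        (by simp only [Complex.sub_re, Complex.one_re, Complex.ofReal_re]; linarith)
      have h2 := Complex.Gamma_mul_Gamma_one_sub ((1/p : ℝ) : ℂ)
      rw [h2] at h1
      have h3 : ((1/p : ℝ) : ℂ) + (1 - ((1/p : ℝ) : ℂ)) = 1 := by ring
      rw [h3, Complex.Gamma_one, one_mul] at h1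
      rw [← h1]
      have : (↑π : ℂ) * ((1/p : ℝ) : ℂ) = ((π / p : ℝ) : ℂ) := by push_cast; ring
      rw [this, ← Complex.ofReal_sin]
      push_cast
      ring
    have hB2 : Complex.betaIntegral ((1/p : ℝ) : ℂ) (1 - ((1/p : ℝ) : ℂ))
        = ((∫ x in (0:ℝ)..1, x ^ (1/p - 1) * (1 - x) ^ (-(1/p)) : ℝ) : ℂ) := by
      rw [Complex.betaIntegral, ← intervalIntegral.integral_ofReal]
      apply intervalIntegral.integral_congr
      intro x hx
      rw [Set.uIcc_of_le zero_le_one] at hx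
      have hx0 : (0:ℝ) ≤ x := hx.1
      have hx1 : (0:ℝ) ≤ 1 - x := by linarith [hx.2]
      have e1 : ((1/p : ℝ) : ℂ) - 1 = ((1/p - 1 : ℝ) : ℂ) := by push_cast; ring
      have e2 : 1 - ((1/p : ℝ) : ℂ) - 1 = ((-(1/p) : ℝ) : ℂ) := by push_cast; ring
      have e3 : 1 - (x : ℂ) = ((1 - x : ℝ) : ℂ) := by push_cast; ring
      show (x:ℂ) ^ (((1/p:ℝ):ℂ) - 1) * (1 - (x:ℂ)) ^ (1 - ((1/p:ℝ):ℂ) - 1)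
        = ((x ^ (1/p - 1) * (1 - x) ^ (-(1/p)) : ℝ) : ℂ)
      rw [e1, e3, e2, ← Complex.ofReal_cpow hx0, ← Complex.ofReal_cpow hx1,
        ← Complex.ofReal_mul]
    rw [hB2] at hB
    have := Complex.ofReal_injective hB
    rw [← this, intervalIntegral.integral_of_le zero_le_one,
      MeasureTheory.integral_Ioc_eq_integral_Ioo]
  have lhs_eq : (∫ t in (0:ℝ)..1, (1 - t ^ p) ^ (-(1/p)))
      = (1/p) * (π / Real.sin (π / p)) := by
    rw [intervalIntegral.integral_of_le zero_le_one,
      MeasureTheory.integral_Ioc_eq_integral_Ioo, key2, hJ]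
  rw [lhs_eq]
  field_simp
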